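/- Let V₁ and V₂ be commuting isometries on a complex Hilbert space H, V := V₁V₂, W₁ := ker V₁*, and F₂ := P_{W₁}V₂P_{W₁} the Fringe operator. Then: (a) ran F₂ = (ran V₁ + ran V₂) ∩ (ran V₁)ᗮ; (b) ran F₂ is closed if and only if ran V₁ + ran V₂ is closed; (c) {h ∈ W₁ : F₂*h = 0} = (ran V₁ + ran V₂)ᗮ = ker V₁* ∩ ker V₂*. -/

import Mathlib

open ContinuousLinearMap
open scoped InnerProductSpace

private lemma ker_adj_eq_orth {H : Type*} [NormedAddCommGroup H] [InnerProductSpace ℂ H]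
    [CompleteSpace H] (A : H →L[ℂ] H) :
    LinearMap.ker (adjoint A : H →ₗ[ℂ] H) = (LinearMap.range (A : H →ₗ[ℂ] H))ᗮ := by
  have key : ∀ (y x : H), ⟪A y, x⟫_ℂ = ⟪y, adjoint A x⟫_ℂ := fun y x => by
    simpa [ContinuousLinearMap.adjoint_adjoint] using
      ContinuousLinearMap.adjoint_inner_left (adjoint A) x y
  ext x
  simp only [LinearMap.mem_ker, Submodule.mem_orthogonal, ContinuousLinearMap.coe_coe]
  constructor
  · rintro h u ⟨y, rfl⟩
    rw [ContinuousLinearMap.coe_coe, key, h, inner_zero_right]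
  · intro h
    have := h (A (adjoint A x)) ⟨adjoint A x, rfl⟩
    rw [key] at this
    exact inner_self_eq_zero.mp this

/-- Let `V₁, V₂` be commuting isometries on a complex Hilbert space,
`W₁ := ker V₁*`, `F₂ := P_{W₁}V₂P_{W₁}`. Then
(a) `ran F₂ = (ran V₁ + ran V₂) ∩ (ran V₁)ᗮ`;
(b) `ran F₂` is closed iff `ran V₁ + ran V₂` is closed;
(c) `{h ∈ W₁ : F₂*h = 0} = (ran V₁ + ran V₂)ᗮ = ker V₁* ∩ ker V₂*`. -/
theorem stmt15 {H : Type*} [NormedAddCommGroup H] [InnerProductSpace ℂ H] [CompleteSpace H]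
    (V₁ V₂ : H →L[ℂ] H)
    (hV₁ : adjoint V₁ ∘L V₁ = 1) (hV₂ : adjoint V₂ ∘L V₂ = 1)
    (hcomm : V₁ ∘L V₂ = V₂ ∘L V₁)
    (F₂ : H →L[ℂ] H)
    (hF₂ : F₂ = (1 - V₁ ∘L adjoint V₁) ∘L (V₂ ∘L (1 - V₁ ∘L adjoint V₁))) :
    (LinearMap.range (F₂ : H →ₗ[ℂ] H) =
        (LinearMap.range (V₁ : H →ₗ[ℂ] H) ⊔ LinearMap.range (V₂ : H →ₗ[ℂ] H)) ⊓ (LinearMap.range (V₁ : H →ₗ[ℂ] H))ᗮ) ∧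
    (IsClosed (LinearMap.range (F₂ : H →ₗ[ℂ] H) : Set H) ↔
        IsClosed ((LinearMap.range (V₁ : H →ₗ[ℂ] H) ⊔ LinearMap.range (V₂ : H →ₗ[ℂ] H) : Submodule ℂ H) : Set H)) ∧
    (LinearMap.ker (adjoint F₂ : H →ₗ[ℂ] H) ⊓ LinearMap.ker (adjoint V₁ : H →ₗ[ℂ] H) =
        (LinearMap.range (V₁ : H →ₗ[ℂ] H) ⊔ LinearMap.range (V₂ : H →ₗ[ℂ] H))ᗮ) ∧
    ((LinearMap.range (V₁ : H →ₗ[ℂ] H) ⊔ LinearMap.range (V₂ : H →ₗ[ℂ] H))ᗮ =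
        LinearMap.ker (adjoint V₁ : H →ₗ[ℂ] H) ⊓ LinearMap.ker (adjoint V₂ : H →ₗ[ℂ] H)) := by
  set M := LinearMap.range (V₁ : H →ₗ[ℂ] H) with hM
  set N := LinearMap.range (V₂ : H →ₗ[ℂ] H) with hN
  set P : H →L[ℂ] H := 1 - V₁ ∘L adjoint V₁ with hP
  -- pointwise versions of hypotheses
  have hV₁' : ∀ x, adjoint V₁ (V₁ x) = x := fun x => by
    have := ContinuousLinearMap.ext_iff.mp hV₁ x
    simpa using this
  have hcomm' : ∀ x, V₁ (V₂ x) = V₂ (V₁ x) := fun x => by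
    have := ContinuousLinearMap.ext_iff.mp hcomm x
    simpa using this
  have hPapp : ∀ x, P x = x - V₁ (adjoint V₁ x) := fun x => by
    rw [hP]
    simp [ContinuousLinearMap.sub_apply, ContinuousLinearMap.comp_apply,
      ContinuousLinearMap.one_apply]
  -- P kills range V₁
  have hPV₁ : ∀ a, P (V₁ a) = 0 := fun a => by
    rw [hPapp, hV₁' a, sub_self]
  -- F₂ = P ∘ V₂ pointwise
  have hF : ∀ b, F₂ b = P (V₂ b) := by
    intro b
    have h1 : F₂ b = P (V₂ (P b)) := by
      rw [hF₂, hP]; rfl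
    rw [h1, hPapp b, map_sub, ← hcomm' (adjoint V₁ b), map_sub, hPV₁, sub_zero]
  -- F₂ x ⟂ range V₁
  have horthmem : ∀ x : H, x ∈ Mᗮ ↔ adjoint V₁ x = 0 := fun x => by
    rw [hM, ← ker_adj_eq_orth]; exact Iff.rfl
  have hPorth : ∀ x, P x ∈ Mᗮ := fun x => by
    rw [horthmem, hPapp, map_sub, hV₁', sub_self]
  -- range F₂ membership characterization
  have h_range : ∀ x : H, x ∈ LinearMap.range (F₂ : H →ₗ[ℂ] H) ↔ x ∈ M ⊔ N ∧ x ∈ Mᗮ := by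
    intro x
    constructor
    · rintro ⟨b, rfl⟩
      refine ⟨?_, by rw [ContinuousLinearMap.coe_coe, hF]; exact hPorth _⟩
      rw [ContinuousLinearMap.coe_coe, hF, hPapp]
      exact Submodule.sub_mem _ (Submodule.mem_sup_right ⟨b, rfl⟩)
        (Submodule.mem_sup_left ⟨adjoint V₁ (V₂ b), rfl⟩)
    · rintro ⟨hx, hxo⟩
      rcases Submodule.mem_sup.mp hx with ⟨m, hm, n, hn, rfl⟩
      rcases hm with ⟨a, rfl⟩
      rcases hn with ⟨b, rfl⟩
      simp only [ContinuousLinearMap.coe_coe] at hxo ⊢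
      refine ⟨b, ?_⟩
      have hP1 : P (V₁ a + V₂ b) = V₁ a + V₂ b := by
        rw [hPapp, (horthmem _).mp hxo, map_zero, sub_zero]
      rw [ContinuousLinearMap.coe_coe, hF, ← hP1, map_add, hPV₁, zero_add]
  -- sup as preimage under P
  have h_sup_pre : ((M ⊔ N : Submodule ℂ H) : Set H) =
      ⇑P ⁻¹' (LinearMap.range (F₂ : H →ₗ[ℂ] H) : Set H) := by
    ext x
    simp only [Set.mem_preimage, SetLike.mem_coe]
    constructor
    · intro hx
      rcases Submodule.mem_sup.mp hx with ⟨m, hm, n, hn, rfl⟩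
      rcases hm with ⟨a, rfl⟩
      rcases hn with ⟨b, rfl⟩
      exact ⟨b, by simp only [ContinuousLinearMap.coe_coe]; rw [hF, map_add, hPV₁, zero_add]⟩
    · rintro ⟨b, hb⟩
      have hx : x = V₁ (adjoint V₁ x) + F₂ b := by
        simp only [ContinuousLinearMap.coe_coe] at hb
        rw [hb, hPapp]; abel
      rw [hx]
      exact Submodule.add_mem _ (Submodule.mem_sup_left ⟨adjoint V₁ x, rfl⟩)
        (((h_range (F₂ b)).mp ⟨b, rfl⟩).1)
  -- range F₂ as a set
  have h_set : (LinearMap.range (F₂ : H →ₗ[ℂ] H) : Set H) =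
      ((M ⊔ N : Submodule ℂ H) : Set H) ∩ (Mᗮ : Set H) := by
    ext x
    simpa using h_range x
  -- sup equality
  have hsup : LinearMap.range (F₂ : H →ₗ[ℂ] H) ⊔ M = M ⊔ N := by
    apply le_antisymm
    · exact sup_le (fun x hx => ((h_range x).mp hx).1) le_sup_left
    · refine sup_le le_sup_right (fun x hx => ?_)
      rcases hx with ⟨b, rfl⟩
      have hx : V₂ b = V₁ (adjoint V₁ (V₂ b)) + F₂ b := by
        rw [hF, hPapp]; abel
      rw [ContinuousLinearMap.coe_coe, hx]
      exact Submodule.add_mem _ (Submodule.mem_sup_right ⟨adjoint V₁ (V₂ b), rfl⟩)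
        (Submodule.mem_sup_left ⟨b, rfl⟩)
  refine ⟨?_, ⟨?_, ?_⟩, ?_, ?_⟩
  · ext x
    rw [Submodule.mem_inf]
    exact h_range x
  · intro h
    rw [h_sup_pre]
    exact h.preimage P.continuous
  · intro h
    rw [h_set]
    exact h.inter M.isClosed_orthogonal
  · rw [ker_adj_eq_orth, ker_adj_eq_orth, ← hM, Submodule.inf_orthogonal, hsup]
  · rw [ker_adj_eq_orth, ker_adj_eq_orth, ← hM, ← hN, Submodule.inf_orthogonal]
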